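/- Let q be a positive integer and let i₁, …, i_q be nonnegative integers, not all zero. Let j₁, …, j_t be the distinct values among i₁, …, i_q, appearing with multiplicities k₁, …, k_t (so k₁ + ⋯ + k_t = q). Then q divides the product of multinomial coefficients ((i₁+⋯+i_q)!/(i₁!⋯i_q!)) · (q!/(k₁!⋯k_t!)). -/

import Mathlib

open Finset
open scoped Nat
variable {α : Type*} [DecidableEq α]

def mm (m : Multiset α) : ℕ := Nat.multinomial m.toFinset m.count

lemma mm_spec (m : Multiset α) :
    (∏ b ∈ m.toFinset, (m.count b)!) * mm m = (Multiset.card m)! := by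
  have := Nat.multinomial_spec m.toFinset m.count
  rwa [Multiset.toFinset_sum_count_eq] at this

lemma mm_zero : mm (0 : Multiset α) = 1 := by simp [mm]

lemma mm_erase {m : Multiset α} {a : α} (h : a ∈ m) :
    Multiset.card m * mm (m.erase a) = m.count a * mm m := by
  have hc : 0 < m.count a := Multiset.count_pos.2 h
  have hcard : Multiset.card (m.erase a) = Multiset.card m - 1 := by
    rw [Multiset.card_erase_of_mem h, Nat.pred_eq_sub_one]
  have hcardpos : 0 < Multiset.card m := Multiset.card_pos.2 (by rintro rfl; simp at h)
  set P' : ℕ := ∏ b ∈ (m.erase a).toFinset, ((m.erase a).count b)! with hP'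
  have hP'pos : 0 < P' := Finset.prod_pos fun _ _ => Nat.factorial_pos _
  apply Nat.eq_of_mul_eq_mul_left hP'pos
  -- LHS : P' * (card m * mm erase) = card m * (card m - 1)! = card m !
  have hL : P' * (Multiset.card m * mm (m.erase a)) = (Multiset.card m)! := by
    rw [mul_left_comm, mm_spec, hcard]
    exact Nat.mul_factorial_pred hcardpos.ne'
  rw [hL]
  -- extend P' to a product over m.toFinset
  have hext : P' = ∏ b ∈ m.toFinset, ((m.erase a).count b)! := by
    rw [hP']
    apply Finset.prod_subset (Multiset.toFinset_subset.2 (Multiset.subset_of_le (m.erase_le a)))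
    intro b _ hb
    rw [Multiset.mem_toFinset, ← Multiset.count_pos, Nat.pos_iff_ne_zero, not_not] at hb
    rw [hb]; rfl
  -- key : count a * P' = ∏ over m.toFinset of (m.count b)!
  have hkey : m.count a * P' = ∏ b ∈ m.toFinset, (m.count b)! := by
    rw [hext]
    have ha' : a ∈ m.toFinset := Multiset.mem_toFinset.2 h
    rw [← Finset.mul_prod_erase _ _ ha', ← Finset.mul_prod_erase _ (fun b => (m.count b)!) ha',
      ← mul_assoc]
    congr 1
    · rw [Multiset.count_erase_self]
      exact Nat.mul_factorial_pred hc.ne'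
    · apply Finset.prod_congr rfl
      intro b hb
      rw [Multiset.count_erase_of_ne (Finset.ne_of_mem_erase hb)]
  rw [show P' * (m.count a * mm m) = (m.count a * P') * mm m from by ring, hkey, mm_spec]

lemma mm_rec {m : Multiset α} (h : m ≠ 0) :
    ∑ a ∈ m.toFinset, mm (m.erase a) = mm m := by
  have hcardpos : 0 < Multiset.card m := Multiset.card_pos.2 h
  apply Nat.eq_of_mul_eq_mul_left hcardpos
  rw [Finset.mul_sum]
  calc ∑ a ∈ m.toFinset, Multiset.card m * mm (m.erase a)
      = ∑ a ∈ m.toFinset, m.count a * mm m := by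
        exact Finset.sum_congr rfl fun a ha => mm_erase (Multiset.mem_toFinset.1 ha)
    _ = (∑ a ∈ m.toFinset, m.count a) * mm m := by rw [Finset.sum_mul]
    _ = Multiset.card m * mm m := by rw [Multiset.toFinset_sum_count_eq]

instance finite_lists (m : Multiset α) : Finite {l : List α // (l : Multiset α) = m} := by
  have : {l : List α | (l : Multiset α) = m}.Finite := by
    apply (m.toList.permutations.finite_toSet).subset
    intro l hl
    simp only [Set.mem_setOf_eq] at hl
    simp only [Set.mem_setOf_eq, List.mem_permutations]
    rw [← Multiset.coe_eq_coe, Multiset.coe_toList, hl]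
  exact this.to_subtype

lemma nat_card_sigma {ι : Type*} [Fintype ι] (f : ι → Type*) [∀ i, Finite (f i)] :
    Nat.card ((i : ι) × f i) = ∑ i, Nat.card (f i) := by
  classical
  letI : ∀ i, Fintype (f i) := fun i => Fintype.ofFinite _
  simp [Nat.card_eq_fintype_card, Fintype.card_sigma]

/-- head/tail decomposition equiv -/
def listEquiv (m : Multiset α) (hm : m ≠ 0) :
    {l : List α // (l : Multiset α) = m} ≃
      (a : {a : α // a ∈ m.toFinset}) × {l : List α // (l : Multiset α) = m.erase a.1} where
  toFun := fun ⟨l, hl⟩ =>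
    have hne : l ≠ [] := by
      intro h0; apply hm; rw [← hl, h0]; rfl
    ⟨⟨l.head hne, by
        rw [Multiset.mem_toFinset, ← hl]
        exact l.head_mem hne⟩,
     ⟨l.tail, by
        have h1 : (l.head hne) :: l.tail = l := List.cons_head_tail hne
        have h2 : (l.head hne) ::ₘ (l.tail : Multiset α) = m := by
          rw [← hl]; conv_rhs => rw [← h1]
          rfl
        show (l.tail : Multiset α) = m.erase (l.head hne)
        rw [← h2, Multiset.erase_cons_head]⟩⟩
  invFun y := ⟨y.1.1 :: y.2.1, by
    show (y.1.1 ::ₘ (y.2.1 : Multiset α)) = m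
    rw [y.2.2, Multiset.cons_erase (Multiset.mem_toFinset.1 y.1.2)]⟩
  left_inv := fun ⟨l, hl⟩ => by
    apply Subtype.ext
    exact List.cons_head_tail _
  right_inv y := by
    rcases y with ⟨⟨a, ha⟩, ⟨l, hl⟩⟩
    rfl

theorem card_lists (m : Multiset α) :
    Nat.card {l : List α // (l : Multiset α) = m} = mm m := by
  induction m using Multiset.strongInductionOn with
  | ih m IH =>
    rcases eq_or_ne m 0 with rfl | hm
    · have hu : ∀ x : {l : List α // (l : Multiset α) = 0}, x = ⟨[], rfl⟩ := by
        rintro ⟨l, hl⟩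
        apply Subtype.ext
        simpa [Multiset.coe_eq_zero] using hl
      rw [mm_zero]
      haveI : Unique {l : List α // (l : Multiset α) = (0 : Multiset α)} := ⟨⟨⟨[], rfl⟩⟩, hu⟩
      exact Nat.card_unique
    · rw [Nat.card_congr (listEquiv m hm), nat_card_sigma, ← mm_rec hm, Finset.univ_eq_attach,
        ← Finset.sum_attach m.toFinset (fun a => mm (m.erase a))]
      apply Finset.sum_congr rfl
      intro a _
      exact IH (m.erase a.1) (Multiset.erase_lt.2 (Multiset.mem_toFinset.1 a.2))

noncomputable def finFnEquivLists (N : ℕ) (m : Multiset α) (h : Multiset.card m = N) :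
    {g : Fin N → α // Multiset.map g Finset.univ.val = m} ≃ {l : List α // (l : Multiset α) = m} := by
  apply Equiv.ofBijective (f := fun g => ⟨List.ofFn g.1, by rw [← Fin.univ_val_map, g.2]⟩)
  constructor
  · rintro ⟨g, hg⟩ ⟨g', hg'⟩ hf
    simp only [Subtype.mk.injEq] at hf ⊢
    exact List.ofFn_injective hf
  · rintro ⟨l, hl⟩
    have hlen : l.length = N := by
      have h2 := congrArg Multiset.card hl
      simp only [Multiset.coe_card] at h2
      rw [h2, h]
    have hofn : List.ofFn (fun j : Fin N => l[(j : ℕ)]'(by omega)) = l := by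
      apply List.ext_getElem
      · simp [hlen]
      · intro i h1 h2
        simp
    refine ⟨⟨fun j : Fin N => l[(j : ℕ)]'(by omega), ?_⟩, ?_⟩
    · rw [Fin.univ_val_map, hofn, hl]
    · apply Subtype.ext
      exact hofn

noncomputable def fnEquivLists {β : Type*} [Fintype β] (m : Multiset α)
    (h : Fintype.card β = Multiset.card m) :
    {g : β → α // Multiset.map g Finset.univ.val = m} ≃ {l : List α // (l : Multiset α) = m} := by
  set e : β ≃ Fin (Fintype.card β) := Fintype.equivFin β
  refine Equiv.trans ?_ (finFnEquivLists (Fintype.card β) m h.symm)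
  refine (Equiv.arrowCongr e (Equiv.refl α)).subtypeEquiv ?_
  intro g
  have : (Equiv.arrowCongr e (Equiv.refl α)) g = g ∘ e.symm := by
    funext x; simp [Equiv.arrowCongr]
  rw [this]
  constructor
  · intro hg
    rw [show Multiset.map (g ∘ e.symm) Finset.univ.val
        = Multiset.map g (Multiset.map e.symm Finset.univ.val) from (Multiset.map_map _ _ _).symm,
      Multiset.map_univ_val_equiv, hg]
  · intro hg
    rw [show Multiset.map (g ∘ e.symm) Finset.univ.val
        = Multiset.map g (Multiset.map e.symm Finset.univ.val) from (Multiset.map_map _ _ _).symm,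
      Multiset.map_univ_val_equiv] at hg
    exact hg

lemma sum_count_univ {γ : Type*} [Fintype γ] [DecidableEq γ] (w : Multiset γ) :
    ∑ c : γ, w.count c = Multiset.card w := by
  rw [← Multiset.toFinset_sum_count_eq w]
  refine (Finset.sum_subset (Finset.subset_univ _) ?_).symm
  intro c _ hc
  exact Multiset.count_eq_zero.2 (fun hmem => hc (Multiset.mem_toFinset.2 hmem))

/-- If `i₁, …, i_q` are nonnegative integers, not all zero, with distinct values
appearing with multiplicities `k₁, …, k_t`, then `q` divides
`((i₁+⋯+i_q)!/(i₁!⋯i_q!)) · (q!/(k₁!⋯k_t!))`. -/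
theorem q_dvd_multinomial_product
    (q : ℕ) (hq : 0 < q) (i : Fin q → ℕ) (h : ∃ m, i m ≠ 0) :
    q ∣ Nat.multinomial Finset.univ i *
        Nat.multinomial (Finset.image i Finset.univ)
          (fun v => (Finset.univ.filter (fun m => i m = v)).card) := by
  classical
  haveI : NeZero q := ⟨hq.ne'⟩
  set n := ∑ m, i m with hn
  set M : Multiset ℕ := Multiset.map i Finset.univ.val with hMdef
  have hMcard : Multiset.card M = q := by simp [hMdef]
  have hMsum : M.sum = n := rfl
  have hnpos : 0 < n := by
    obtain ⟨m, hm⟩ := h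
    exact lt_of_lt_of_le (Nat.pos_of_ne_zero hm)
      (Finset.single_le_sum (f := i) (fun _ _ => Nat.zero_le _) (Finset.mem_univ m))
  -- Step A : the second multinomial is mm M
  have hA : Nat.multinomial (Finset.image i Finset.univ)
      (fun v => (Finset.univ.filter (fun m => i m = v)).card) = mm M := by
    have h1 : M.toFinset = Finset.image i Finset.univ := by
      rw [hMdef, Multiset.toFinset_map, Finset.val_toFinset]
    rw [mm, h1]
    apply Nat.multinomial_congr
    intro v _
    rw [hMdef, Multiset.count_map]
    rw [show (Finset.univ.filter (fun m => i m = v)).card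
        = Multiset.card (Multiset.filter (fun m => i m = v) Finset.univ.val) from rfl]
    congr 1
    apply Multiset.filter_congr
    intro m _
    constructor
    · exact fun hh => hh.symm
    · exact fun hh => hh.symm
  -- main counting objects
  set V : (Fin n → ZMod q) → Multiset (ZMod q) :=
    (fun g => Multiset.map g Finset.univ.val) with hV
  set C : Multiset (ZMod q) → Multiset ℕ :=
    (fun w => Multiset.map (fun c => w.count c) Finset.univ.val) with hC
  have hZcard : Fintype.card (ZMod q) = q := ZMod.card q
  -- the set of "count functions" W
  have hE0 : ∀ (w : Multiset (ZMod q)),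
      Multiset.map (⇑(Multiset.toFinsupp.toEquiv.trans Finsupp.equivFunOnFinite) w)
        Finset.univ.val = C w := by
    intro w
    apply Multiset.map_congr rfl
    intro c _
    simp
  have E_W : {w : Multiset (ZMod q) // C w = M} ≃
      {s : ZMod q → ℕ // Multiset.map s Finset.univ.val = M} := by
    refine (Multiset.toFinsupp.toEquiv.trans Finsupp.equivFunOnFinite).subtypeEquiv ?_
    intro w
    rw [hE0 w]
  haveI : Finite {s : ZMod q → ℕ // Multiset.map s Finset.univ.val = M} :=
    Finite.of_equiv _ (fnEquivLists M (by rw [hZcard, hMcard])).symm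
  haveI finW : Finite {w : Multiset (ZMod q) // C w = M} := Finite.of_equiv _ E_W.symm
  have hcardW : Nat.card {w : Multiset (ZMod q) // C w = M} = mm M := by
    rw [Nat.card_congr E_W, Nat.card_congr (fnEquivLists M (by rw [hZcard, hMcard])),
      card_lists]
  -- each w with C w = M has card n
  have hwcard : ∀ w : Multiset (ZMod q), C w = M → Multiset.card w = n := by
    intro w hw
    have h1 : (C w).sum = M.sum := by rw [hw]
    have h2 : (C w).sum = Multiset.card w := sum_count_univ w
    rw [h2, hMsum] at h1
    exact h1
  -- fiber counts
  have hfiber : ∀ w : Multiset (ZMod q), C w = M →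
      Nat.card {g : Fin n → ZMod q // V g = w} = Nat.multinomial Finset.univ i := by
    intro w hw
    have hcard : Fintype.card (Fin n) = Multiset.card w := by
      rw [Fintype.card_fin, hwcard w hw]
    rw [hV, Nat.card_congr (fnEquivLists w hcard), card_lists]
    have hprod : (∏ b ∈ w.toFinset, (w.count b)!) = ∏ m : Fin q, (i m)! := by
      rw [Finset.prod_subset (Finset.subset_univ w.toFinset) (by
        intro c _ hc
        rw [show Multiset.count c w = 0 from
          Multiset.count_eq_zero.2 (fun hmem => hc (Multiset.mem_toFinset.2 hmem))]
        rfl)]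
      have l1 : ∏ c : ZMod q, (w.count c)! = ((C w).map Nat.factorial).prod := by
        rw [hC]
        simp only [Multiset.map_map]
        rfl
      have l2 : ∏ m : Fin q, (i m)! = (M.map Nat.factorial).prod := by
        rw [hMdef]
        simp only [Multiset.map_map]
        rfl
      rw [l1, l2, hw]
    have s1 := mm_spec w
    have s2 := Nat.multinomial_spec Finset.univ i
    rw [hprod, hwcard w hw] at s1
    rw [← hn] at s2
    exact Nat.eq_of_mul_eq_mul_left (Finset.prod_pos fun _ _ => Nat.factorial_pos _)
      (s1.trans s2.symm)
  -- sigma decomposition of S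
  have E_S : {g : Fin n → ZMod q // C (V g) = M} ≃
      Σ w : {w : Multiset (ZMod q) // C w = M}, {g : Fin n → ZMod q // V g = w.1} :=
    { toFun := fun g => ⟨⟨V g.1, g.2⟩, ⟨g.1, rfl⟩⟩
      invFun := fun p => ⟨p.2.1, by rw [p.2.2]; exact p.1.2⟩
      left_inv := fun g => rfl
      right_inv := fun p => by
        rcases p with ⟨⟨w, hw⟩, ⟨g, hg⟩⟩
        obtain rfl : V g = w := hg
        rfl }
  letI fintW : Fintype {w : Multiset (ZMod q) // C w = M} := Fintype.ofFinite _
  have hcardS : Nat.card {g : Fin n → ZMod q // C (V g) = M}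
      = mm M * Nat.multinomial Finset.univ i := by
    rw [Nat.card_congr E_S, nat_card_sigma]
    rw [Finset.sum_congr rfl (fun w _ => hfiber w.1 w.2)]
    rw [Finset.sum_const, Finset.card_univ, smul_eq_mul, ← Nat.card_eq_fintype_card, hcardW]
  -- invariance of the condition under adding a constant
  have hinv : ∀ (g : Fin n → ZMod q) (c : ZMod q), C (V (fun x => g x + c)) = C (V g) := by
    intro g c
    have h1 : V (fun x => g x + c) = Multiset.map (fun d => d + c) (V g) := by
      rw [hV]
      simp only [Multiset.map_map]
      rfl
    have h2 : ∀ d : ZMod q, (Multiset.map (fun d => d + c) (V g)).count d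
        = (V g).count (d - c) := by
      intro d
      conv_lhs => rw [show d = (d - c) + c by ring]
      exact Multiset.count_map_eq_count' _ _ (add_left_injective c) _
    rw [h1, hC]
    simp only [h2]
    have h3 : Multiset.map (fun d => (V g).count (d - c)) Finset.univ.val
        = Multiset.map ((fun d => (V g).count d) ∘ (fun d => d - c)) Finset.univ.val := rfl
    rw [h3, ← Multiset.map_map, show Multiset.map (fun d => d - c) Finset.univ.val
        = Multiset.map (⇑(Equiv.subRight c)) Finset.univ.val from rfl,
      Multiset.map_univ_val_equiv]
  -- the shifting equivalence
  set x₀ : Fin n := ⟨0, hnpos⟩ with hx₀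
  have E_D : {g : Fin n → ZMod q // C (V g) = M} ≃
      ZMod q × {g : Fin n → ZMod q // C (V g) = M ∧ g x₀ = 0} :=
    { toFun := fun g => ⟨g.1 x₀, ⟨fun x => g.1 x + (-(g.1 x₀)), by
        constructor
        · rw [hinv g.1 (-(g.1 x₀))]; exact g.2
        · simp⟩⟩
      invFun := fun p => ⟨fun x => p.2.1 x + p.1, by
        rw [hinv p.2.1 p.1]; exact p.2.2.1⟩
      left_inv := fun g => by
        apply Subtype.ext
        funext x
        simp
      right_inv := fun p => by
        rcases p with ⟨c, ⟨g, hg1, hg2⟩⟩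
        refine Prod.ext ?_ ?_
        · simp [hg2]
        · apply Subtype.ext
          funext x
          simp [hg2] }
  -- conclude
  have hfinal : mm M * Nat.multinomial Finset.univ i
      = q * Nat.card {g : Fin n → ZMod q // C (V g) = M ∧ g x₀ = 0} := by
    rw [← hcardS, Nat.card_congr E_D, Nat.card_prod, Nat.card_zmod]
  rw [hA, mul_comm]
  exact ⟨_, hfinal⟩
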